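/- arXiv:1811.11043 — 3 statements merged into one kernel-verified Lean document; each statement's English description precedes it below -/
import Mathlib

section
/- Monotonicity of the filtered maximum: suppose each arm i has non-increasing means μ_i, window-averages μ̄_i^h(n_i), estimates satisfying |μ̂_i^h(n_i) − μ̄_i^h(n_i)| ≤ c(h) for all h, and the filter keeps K_{h+1} = {i ∈ K_h : μ̂_i^h ≥ max_{j∈K_h} μ̂_j^h − 2c(h)}. Then for all h' with h' + 1 ≤ min_{i∈K_{h'}} n_i, max_{i ∈ K_{h'+1}} μ̄_i^{h'+1}(n_i) ≥ max_{i ∈ K_{h'}} μ̄_i^{h'}(n_i). -/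
open Finset

/-- Monotonicity of the filtered maximum of window averages. -/
theorem filtered_max_monotone {α : Type*} [DecidableEq α]
    (μ : α → ℕ → ℝ) (hmono : ∀ i m, μ i (m + 1) ≤ μ i m)
    (n : α → ℕ) (c : ℕ → ℝ) (hc : ∀ h, 0 ≤ c h)
    (μhat : α → ℕ → ℝ)
    (h' : ℕ) (hh' : 1 ≤ h')
    (Kh : Finset α) (hne : Kh.Nonempty)
    (hpulls : ∀ i ∈ Kh, h' + 1 ≤ n i)
    (hconc : ∀ i ∈ Kh, ∀ h, 1 ≤ h → h ≤ n i →
      |μhat i h - (1 / (h : ℝ)) * ∑ j ∈ Finset.Icc 1 h, μ i (n i - j)| ≤ c h)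
    (Kh1 : Finset α)
    (hfilter : Kh1 = Kh.filter (fun i =>
      Kh.sup' hne (fun j => μhat j h') - 2 * c h' ≤ μhat i h')) :
    ∃ i ∈ Kh1,
      Kh.sup' hne (fun j => (1 / (h' : ℝ)) * ∑ l ∈ Finset.Icc 1 h', μ j (n j - l))
        ≤ (1 / ((h' : ℝ) + 1)) * ∑ l ∈ Finset.Icc 1 (h' + 1), μ i (n i - l) := by
  set A : α → ℝ := fun j => (1 / (h' : ℝ)) * ∑ l ∈ Finset.Icc 1 h', μ j (n j - l) with hA
  obtain ⟨i, hi, hsup⟩ := Kh.exists_mem_eq_sup' hne A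
  have hanti : ∀ j, Antitone (μ j) := fun j =>
    antitone_nat_of_succ_le (fun m => hmono j m)
  have hni : h' ≤ n i := le_trans (Nat.le_succ h') (hpulls i hi)
  have hci := hconc i hi h' hh' hni
  have hch := hc h'
  refine ⟨i, ?_, ?_⟩
  · rw [hfilter, mem_filter]
    refine ⟨hi, sub_le_iff_le_add.mpr (Finset.sup'_le _ _ fun j hj => ?_)⟩
    have hcj := hconc j hj h' hh' (le_trans (Nat.le_succ h') (hpulls j hj))
    have h1 : μhat j h' ≤ A j + c h' := by
      have := abs_le.mp hcj
      simp only [hA]; linarith [this.1, this.2]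
    have h2 : A i ≤ μhat i h' + c h' := by
      have := abs_le.mp hci
      simp only [hA]; linarith [this.1, this.2]
    have h3 : A j ≤ A i := hsup ▸ Finset.le_sup' A hj
    linarith
  · rw [hsup]
    have hpos : (0 : ℝ) < (h' : ℝ) := by exact_mod_cast hh'
    have hpos1 : (0 : ℝ) < (h' : ℝ) + 1 := by linarith
    set S := ∑ l ∈ Finset.Icc 1 h', μ i (n i - l) with hS
    set t := μ i (n i - (h' + 1)) with ht
    have hsplit : ∑ l ∈ Finset.Icc 1 (h' + 1), μ i (n i - l) = S + t := by
      rw [hS, Finset.sum_Icc_succ_top (Nat.le_succ_of_le hh')]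
    have hterm : S ≤ (h' : ℝ) * t := by
      have : S ≤ (Finset.Icc 1 h').card • t := by
        apply Finset.sum_le_card_nsmul
        intro l hl
        exact hanti i (Nat.sub_le_sub_left (Nat.le_succ_of_le (Finset.mem_Icc.mp hl).2) (n i))
      simpa [Nat.card_Icc, nsmul_eq_mul] using this
    show (1 / (h' : ℝ)) * S ≤ _
    rw [hsplit, div_mul_eq_mul_div, div_mul_eq_mul_div, div_le_div_iff₀ hpos hpos1]
    nlinarith
end

section
/- Regret upper bound via over-pulls: with UP and OP as before, if μ⁺ ≥ μ_i(s) for every i ∈ UP and every s with N_i^π ≤ s ≤ N_i^⋆ − 1, then Σ_{i∈UP} Σ_{s=N_i^π}^{N_i^⋆−1} μ_i(s) − Σ_{i∈OP} Σ_{s=N_i^⋆}^{N_i^π−1} μ_i(s) ≤ Σ_{i∈OP} Σ_{h=0}^{N_i^π−N_i^⋆−1} (μ⁺ − μ_i(N_i^⋆ + h)). -/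
open Finset

/-- Regret upper bound via over-pulls. -/
theorem regret_upper_bound_via_overpulls (K T : ℕ) (μ : Fin K → ℕ → ℝ)
    (Npi Nstar : Fin K → ℕ)
    (hpi : ∑ i, Npi i = T) (hstar : ∑ i, Nstar i = T)
    (μplus : ℝ)
    (hup : ∀ i : Fin K, Npi i < Nstar i →
      ∀ s, Npi i ≤ s → s ≤ Nstar i - 1 → μ i s ≤ μplus) :
    (∑ i ∈ Finset.univ.filter (fun i => Npi i < Nstar i),
        ∑ s ∈ Finset.Ico (Npi i) (Nstar i), μ i s)
      - (∑ i ∈ Finset.univ.filter (fun i => Nstar i < Npi i),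
          ∑ s ∈ Finset.Ico (Nstar i) (Npi i), μ i s)
      ≤ ∑ i ∈ Finset.univ.filter (fun i => Nstar i < Npi i),
          ∑ h ∈ Finset.range (Npi i - Nstar i), (μplus - μ i (Nstar i + h)) := by
  set A := Finset.univ.filter (fun i => Npi i < Nstar i) with hA
  set B := Finset.univ.filter (fun i => Nstar i < Npi i) with hB
  -- rewrite RHS
  have hRHS : ∑ i ∈ B, ∑ h ∈ Finset.range (Npi i - Nstar i), (μplus - μ i (Nstar i + h))
      = (∑ i ∈ B, ((Npi i - Nstar i : ℕ) : ℝ) * μplus)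
        - ∑ i ∈ B, ∑ s ∈ Finset.Ico (Nstar i) (Npi i), μ i s := by
    rw [← Finset.sum_sub_distrib]
    refine Finset.sum_congr rfl fun i hi => ?_
    rw [Finset.sum_sub_distrib, Finset.sum_const, Finset.card_range, nsmul_eq_mul,
      Finset.sum_Ico_eq_sum_range]
  rw [hRHS]
  have key : ∑ i ∈ A, ∑ s ∈ Finset.Ico (Npi i) (Nstar i), μ i s
      ≤ ∑ i ∈ B, ((Npi i - Nstar i : ℕ) : ℝ) * μplus := by
    have hcount : ∑ i ∈ A, (Nstar i - Npi i : ℕ) = ∑ i ∈ B, (Npi i - Nstar i : ℕ) := by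
      have hz : ∑ i, ((Nstar i : ℤ) - Npi i) = 0 := by
        rw [Finset.sum_sub_distrib, ← Nat.cast_sum, ← Nat.cast_sum, hpi, hstar]
        ring
      have hsplit : (Finset.univ : Finset (Fin K)) = A ∪ B ∪
          Finset.univ.filter (fun i => Npi i = Nstar i) := by
        ext i
        simp only [hA, hB, Finset.mem_union, Finset.mem_filter, Finset.mem_univ, true_and,
          true_iff]
        omega
      have hdisj : Disjoint A B := by
        rw [Finset.disjoint_filter]
        intro i _ h1
        omega
      have hdisj2 : Disjoint (A ∪ B) (Finset.univ.filter (fun i => Npi i = Nstar i)) := by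
        rw [Finset.disjoint_left]
        intro i hi hi2
        simp only [hA, hB, Finset.mem_union, Finset.mem_filter, Finset.mem_univ, true_and] at hi hi2
        omega
      rw [hsplit, Finset.sum_union hdisj2, Finset.sum_union hdisj] at hz
      have h3 : ∑ i ∈ Finset.univ.filter (fun i => Npi i = Nstar i),
          ((Nstar i : ℤ) - Npi i) = 0 := by
        apply Finset.sum_eq_zero
        intro i hi
        simp only [Finset.mem_filter] at hi
        omega
      have hAz : ∑ i ∈ A, ((Nstar i : ℤ) - Npi i) = ∑ i ∈ A, ((Nstar i - Npi i : ℕ) : ℤ) := by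
        refine Finset.sum_congr rfl fun i hi => ?_
        simp only [hA, Finset.mem_filter] at hi
        omega
      have hBz : ∑ i ∈ B, ((Nstar i : ℤ) - Npi i) = -∑ i ∈ B, ((Npi i - Nstar i : ℕ) : ℤ) := by
        rw [← Finset.sum_neg_distrib]
        refine Finset.sum_congr rfl fun i hi => ?_
        simp only [hB, Finset.mem_filter] at hi
        omega
      rw [hAz, hBz, h3] at hz
      have : (∑ i ∈ A, ((Nstar i - Npi i : ℕ) : ℤ)) = ∑ i ∈ B, ((Npi i - Nstar i : ℕ) : ℤ) := by
        omega
      exact_mod_cast this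
    calc ∑ i ∈ A, ∑ s ∈ Finset.Ico (Npi i) (Nstar i), μ i s
        ≤ ∑ i ∈ A, ((Nstar i - Npi i : ℕ) : ℝ) * μplus := by
          refine Finset.sum_le_sum fun i hi => ?_
          simp only [hA, Finset.mem_filter, Finset.mem_univ, true_and] at hi
          have := Finset.sum_le_card_nsmul (Finset.Ico (Npi i) (Nstar i)) (μ i) μplus ?_
          · rwa [Nat.card_Ico, nsmul_eq_mul] at this
          · intro s hs
            rw [Finset.mem_Ico] at hs
            exact hup i hi s hs.1 (by omega)
      _ = ∑ i ∈ B, ((Npi i - Nstar i : ℕ) : ℝ) * μplus := by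
          rw [← Finset.sum_mul, ← Finset.sum_mul]
          congr 1
          exact_mod_cast congrArg (Nat.cast : ℕ → ℝ) hcount
  linarith
end

section
/- Greedy is near-optimal for deterministic rotting bandits: for K arms with non-increasing reward functions μ_i with per-step decay bounded by L (μ_i(n) − μ_i(n+1) ∈ [0, L]) and μ_i(0) ∈ [0, L], the greedy policy π that at each round pulls an arm maximizing the last observed reward μ_i(N_{i,t} − 1) (after pulling each arm once) suffers regret J^⋆ − J_T(π) ≤ L(K − 1) for every horizon T ≥ K, where J^⋆ is the maximum of Σ_i Σ_{s=0}^{N_i −1} μ_i(s) over allocations summing to T. -/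
open Finset

/-- The greedy policy (pull each arm once, then always pull an arm whose
last observed mean reward is maximal) suffers regret at most `L (K - 1)` on any
deterministic rotting bandit instance with decays bounded by `L`. -/

theorem greedy_near_optimal_deterministic_rotting
    (K T : ℕ) (hK : 1 ≤ K) (hKT : K ≤ T)
    (L : ℝ) (hL : 0 ≤ L)
    (μ : Fin K → ℕ → ℝ)
    (hdecay : ∀ i n, 0 ≤ μ i n - μ i (n + 1) ∧ μ i n - μ i (n + 1) ≤ L)
    (hinit : ∀ i, 0 ≤ μ i 0 ∧ μ i 0 ≤ L)
    (pulls : ℕ → Fin K)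
    (cnt : ℕ → Fin K → ℕ)
    (hcnt : ∀ t i, cnt t i = ((Finset.range t).filter (fun s => pulls s = i)).card)
    (hfirst : ∀ i, 1 ≤ cnt K i)
    (hgreedy : ∀ t, K ≤ t → t < T → ∀ j : Fin K,
      μ j (cnt t j - 1) ≤ μ (pulls t) (cnt t (pulls t) - 1)) :
    ∀ N : Fin K → ℕ, (∑ i, N i = T) →
      (∑ i, ∑ s ∈ Finset.range (N i), μ i s)
        - (∑ i, ∑ s ∈ Finset.range (cnt T i), μ i s)
        ≤ L * ((K : ℝ) - 1) := by
  classical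
  intro N hN
  -- basic facts about μ
  have hmono : ∀ i, Antitone (μ i) := fun i =>
    antitone_nat_of_succ_le (fun n => by linarith [(hdecay i n).1])
  have hub : ∀ i s, μ i s ≤ L := fun i s =>
    le_trans (hmono i (Nat.zero_le s)) (hinit i).2
  -- basic facts about cnt
  have hcnt_mono : ∀ {t t' : ℕ} (i : Fin K), t ≤ t' → cnt t i ≤ cnt t' i := by
    intro t t' i h
    rw [hcnt, hcnt]
    exact card_le_card (filter_subset_filter _ (range_subset_range.mpr h))
  have hsum : ∀ t, (∑ i, cnt t i) = t := by
    intro t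
    have h := Finset.card_eq_sum_card_fiberwise
      (f := pulls) (s := range t) (t := univ) (fun x _ => mem_univ _)
    rw [card_range] at h
    calc (∑ i, cnt t i) = ∑ i, ((range t).filter (fun s => pulls s = i)).card :=
          Finset.sum_congr rfl (fun i _ => hcnt t i)
      _ = t := h.symm
  have hK1 : ∀ i, cnt K i = 1 := by
    have h0 : (∑ j, (cnt K j - 1)) = 0 := by
      have h1 : (∑ j, cnt K j) = (∑ j, ((cnt K j - 1) + 1)) :=
        Finset.sum_congr rfl (fun j _ => by have := hfirst j; omega)
      rw [Finset.sum_add_distrib] at h1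
      simp only [Finset.sum_const, card_univ, Fintype.card_fin, smul_eq_mul, mul_one] at h1
      have := hsum K
      omega
    intro i
    have := (Finset.sum_eq_zero_iff).mp h0 i (mem_univ i)
    have := hfirst i
    omega
  have hstep : ∀ t i, cnt (t + 1) i = cnt t i + (if pulls t = i then 1 else 0) := by
    intro t i
    rw [hcnt (t + 1) i, hcnt t i, range_add_one, filter_insert]
    by_cases h : pulls t = i
    · rw [if_pos h, if_pos h, card_insert_of_notMem (by simp)]
    · rw [if_neg h, if_neg h, Nat.add_zero]
  -- existence of pull times
  have hex : ∀ (a : Fin K) (n : ℕ), n < cnt T a →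
      ∃ t, t < T ∧ pulls t = a ∧ cnt t a = n := by
    intro a n hn
    have hT1 : 1 ≤ T := le_trans hK hKT
    have hP : ∃ t, n < cnt (t + 1) a := ⟨T - 1, by
      have h2 : T - 1 + 1 = T := by omega
      rwa [h2]⟩
    set t0 := Nat.find hP with ht0def
    have ht0 : n < cnt (t0 + 1) a := Nat.find_spec hP
    have hle : cnt t0 a ≤ n := by
      rcases Nat.eq_zero_or_pos t0 with h | h
      · rw [h]
        have : cnt 0 a = 0 := by rw [hcnt]; simp
        omega
      · have hmin := Nat.find_min hP (m := t0 - 1) (by omega)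
        push_neg at hmin
        have h2 : t0 - 1 + 1 = t0 := by omega
        rwa [h2] at hmin
    have hstep0 := hstep t0 a
    have hpa : pulls t0 = a := by
      by_contra h
      rw [if_neg h] at hstep0
      omega
    have hct : cnt t0 a = n := by rw [if_pos hpa] at hstep0; omega
    have htT : t0 < T := by
      by_contra h
      push_neg at h
      have := hcnt_mono a h
      omega
    exact ⟨t0, htT, hpa, hct⟩
  have hlateK : ∀ (t : ℕ) (a : Fin K), pulls t = a → 1 ≤ cnt t a → K ≤ t := by
    intro t a hp h1
    by_contra hlt
    push_neg at hlt
    have h2 : 2 ≤ cnt (t + 1) a := by rw [hstep t a, if_pos hp]; omega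
    have h3 : cnt (t + 1) a ≤ cnt K a := hcnt_mono a (by omega)
    rw [hK1 a] at h3
    omega
  -- KEY greedy domination lemma
  have key : ∀ (a : Fin K) (n : ℕ), 1 ≤ n → n < cnt T a →
      ∀ j, μ j (cnt T j - 1) ≤ μ a (n - 1) := by
    intro a n h1 h2 j
    obtain ⟨t, htT, hpa, hct⟩ := hex a n h2
    have hKt : K ≤ t := hlateK t a hpa (by omega)
    have hg := hgreedy t hKt htT j
    rw [hpa, hct] at hg
    have hcj : 1 ≤ cnt t j := by
      have := hcnt_mono j hKt
      rw [hK1 j] at this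
      omega
    have hle2 : μ j (cnt T j - 1) ≤ μ j (cnt t j - 1) := by
      apply hmono j
      have := hcnt_mono j (le_of_lt htT)
      omega
    linarith
  -- set up notation
  set c : Fin K → ℕ := cnt T with hcdef
  have hc1 : ∀ i, 1 ≤ c i := fun i => by
    have h := hcnt_mono i hKT
    rw [hK1 i] at h
    exact h
  have hcT : (∑ i, c i) = T := hsum T
  set d : Fin K → ℝ := fun i =>
    (∑ s ∈ Finset.range (N i), μ i s) - (∑ s ∈ Finset.range (c i), μ i s) with hddef
  have hDsum : (∑ i, ∑ s ∈ Finset.range (N i), μ i s)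
        - (∑ i, ∑ s ∈ Finset.range (c i), μ i s) = ∑ i, d i := by
    rw [← Finset.sum_sub_distrib]
  rw [hDsum]
  set A : Finset (Fin K) := univ.filter (fun i => N i < c i) with hAdef
  set B : Finset (Fin K) := univ.filter (fun i => c i < N i) with hBdef
  have hAB : Disjoint A B := by
    rw [Finset.disjoint_left]
    intro x hxA hxB
    rw [hAdef, mem_filter] at hxA
    rw [hBdef, mem_filter] at hxB
    omega
  have hD : (∑ i, d i) = (∑ i ∈ A, d i) + (∑ i ∈ B, d i) := by
    rw [← Finset.sum_union hAB]
    refine (Finset.sum_subset (subset_univ _) ?_).symm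
    intro x _ hx
    rw [Finset.mem_union, hAdef, hBdef, mem_filter, mem_filter] at hx
    have hxe : N x = c x := by
      simp only [mem_univ, true_and] at hx
      push_neg at hx
      omega
    rw [hddef]
    simp [hxe]
  rw [hD]
  have hK1R : (0:ℝ) ≤ (K:ℝ) - 1 := by
    have : (1:ℝ) ≤ K := by exact_mod_cast hK
    linarith
  by_cases hB : B.Nonempty
  · -- main case
    obtain ⟨j0, hj0B, hj0max⟩ := Finset.exists_max_image B (fun j => μ j (c j - 1)) hB
    set x : ℝ := μ j0 (c j0 - 1) with hxdef
    -- upper bound on B-part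
    have hBsum : (∑ i ∈ B, d i) ≤ ∑ i ∈ B, ((N i : ℝ) - c i) * x := by
      apply Finset.sum_le_sum
      intro i hiB
      have hiB' : c i < N i := by
        rw [hBdef, mem_filter] at hiB; exact hiB.2
      have hd : d i = ∑ s ∈ Finset.Ico (c i) (N i), μ i s := by
        rw [hddef]
        rw [Finset.sum_Ico_eq_sub _ (le_of_lt hiB')]
      rw [hd]
      calc (∑ s ∈ Finset.Ico (c i) (N i), μ i s)
          ≤ ∑ _s ∈ Finset.Ico (c i) (N i), x := by
            apply Finset.sum_le_sum
            intro s hs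
            have hs' := (Finset.mem_Ico.mp hs).1
            have h1 : μ i s ≤ μ i (c i - 1) := hmono i (by omega)
            exact le_trans h1 (hj0max i hiB)
        _ = ((N i - c i : ℕ) : ℝ) * x := by
            rw [Finset.sum_const, Nat.card_Ico, nsmul_eq_mul]
        _ = ((N i : ℝ) - c i) * x := by
            rw [Nat.cast_sub (le_of_lt hiB')]
    -- lower bound on A-part (as an upper bound on d)
    have hAsum : (∑ i ∈ A, d i) ≤ ∑ i ∈ A, (-(((c i : ℝ) - N i) * x) + L) := by
      apply Finset.sum_le_sum
      intro a haA
      have haA' : N a < c a := by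
        rw [hAdef, mem_filter] at haA; exact haA.2
      have hd : d a = -(∑ s ∈ Finset.Ico (N a) (c a), μ a s) := by
        rw [hddef]
        rw [Finset.sum_Ico_eq_sub _ (le_of_lt haA')]
        ring
      rw [hd]
      have hsplit : (∑ s ∈ Finset.Ico (N a) (c a), μ a s)
          = (∑ s ∈ Finset.Ico (N a) (c a - 1), μ a s) + μ a (c a - 1) := by
        have h2 : N a ≤ c a - 1 := by omega
        have h3 := Finset.sum_Ico_succ_top h2 (μ a)
        have h4 : c a - 1 + 1 = c a := by have := hc1 a; omega
        rw [h4] at h3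
        exact h3
      have hmain : (∑ s ∈ Finset.Ico (N a) (c a - 1), μ a s)
          ≥ ((c a - 1 - N a : ℕ) : ℝ) * x := by
        calc (∑ s ∈ Finset.Ico (N a) (c a - 1), μ a s)
            ≥ ∑ _s ∈ Finset.Ico (N a) (c a - 1), x := by
              apply Finset.sum_le_sum
              intro s hs
              obtain ⟨hs1, hs2⟩ := Finset.mem_Ico.mp hs
              have hkey := key a (s + 1) (by omega) (by
                have := hc1 a
                omega) j0
              simpa using hkey
          _ = ((c a - 1 - N a : ℕ) : ℝ) * x := by
              rw [Finset.sum_const, Nat.card_Ico, nsmul_eq_mul]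
      have hlast : x ≤ μ a (c a - 1) + L := by
        rcases Nat.lt_or_ge (c a) 2 with h2 | h2
        · -- c a = 1
          have hca : c a = 1 := by have := hc1 a; omega
          have h3 : x ≤ L := hub j0 _
          have h4 : 0 ≤ μ a 0 := (hinit a).1
          rw [hca]
          simpa using by linarith
        · have hkey := key a (c a - 1) (by omega) (by show c a - 1 < c a; omega) j0
          have heq : c a - 1 - 1 = c a - 2 := by omega
          rw [heq] at hkey
          have hdec := (hdecay a (c a - 2)).2
          have heq2 : c a - 2 + 1 = c a - 1 := by omega
          rw [heq2] at hdec
          linarith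
      have hcast : ((c a - 1 - N a : ℕ) : ℝ) = (c a : ℝ) - 1 - N a := by
        have h1 : N a ≤ c a - 1 := by omega
        have h2 : (1:ℕ) ≤ c a := hc1 a
        push_cast [Nat.cast_sub h1, Nat.cast_sub h2]
        ring
      rw [hcast] at hmain
      linarith
    -- combine
    have hsumeq : (∑ i ∈ A, ((c i : ℝ) - N i)) = ∑ i ∈ B, ((N i : ℝ) - c i) := by
      have h0 : (∑ i, ((c i : ℝ) - N i)) = 0 := by
        rw [Finset.sum_sub_distrib]
        have h1 : (∑ i, (c i : ℝ)) = (T : ℝ) := by exact_mod_cast congrArg (Nat.cast (R := ℝ)) hcT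
        have h2 : (∑ i, (N i : ℝ)) = (T : ℝ) := by exact_mod_cast congrArg (Nat.cast (R := ℝ)) hN
        rw [h1, h2]; ring
      have h3 : (∑ i, ((c i : ℝ) - N i))
          = (∑ i ∈ A, ((c i : ℝ) - N i)) + (∑ i ∈ B, ((c i : ℝ) - N i)) := by
        rw [← Finset.sum_union hAB]
        refine (Finset.sum_subset (subset_univ _) ?_).symm
        intro y _ hy
        rw [Finset.mem_union, hAdef, hBdef, mem_filter, mem_filter] at hy
        simp only [mem_univ, true_and] at hy
        push_neg at hy
        have : N y = c y := by omega
        rw [this]; ring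
      rw [h3] at h0
      have h4 : (∑ i ∈ B, ((c i : ℝ) - N i)) = -∑ i ∈ B, ((N i : ℝ) - c i) := by
        rw [← Finset.sum_neg_distrib]
        exact Finset.sum_congr rfl (fun i _ => by ring)
      rw [h4] at h0
      linarith
    have hcardA : (A.card : ℝ) ≤ (K : ℝ) - 1 := by
      have hj0A : j0 ∉ A := Finset.disjoint_right.mp hAB hj0B
      have hsub : A ⊆ univ.erase j0 := by
        intro y hy
        exact Finset.mem_erase.mpr ⟨fun h => hj0A (h ▸ hy), mem_univ y⟩
      have := Finset.card_le_card hsub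
      rw [Finset.card_erase_of_mem (mem_univ j0), card_univ, Fintype.card_fin] at this
      have : (A.card : ℝ) ≤ ((K - 1 : ℕ) : ℝ) := by exact_mod_cast this
      rw [Nat.cast_sub hK] at this
      simpa using this
    have hexpand : (∑ i ∈ A, (-(((c i : ℝ) - N i) * x) + L))
        = -((∑ i ∈ A, ((c i : ℝ) - N i)) * x) + A.card * L := by
      rw [Finset.sum_add_distrib, Finset.sum_const, nsmul_eq_mul, Finset.sum_neg_distrib,
        Finset.sum_mul]
    have hBx : (∑ i ∈ B, ((N i : ℝ) - c i) * x) = (∑ i ∈ B, ((N i : ℝ) - c i)) * x := by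
      rw [Finset.sum_mul]
    calc (∑ i ∈ A, d i) + (∑ i ∈ B, d i)
        ≤ (∑ i ∈ A, (-(((c i : ℝ) - N i) * x) + L)) + (∑ i ∈ B, ((N i : ℝ) - c i) * x) :=
          add_le_add hAsum hBsum
      _ = A.card * L := by
          rw [hexpand, hBx, hsumeq]; ring
      _ ≤ L * ((K : ℝ) - 1) := by
          rw [mul_comm]
          exact mul_le_mul_of_nonneg_left hcardA hL
  · -- B empty: then N = c pointwise
    have hNle : ∀ i, N i ≤ c i := by
      intro i
      by_contra h
      exact hB ⟨i, by rw [hBdef, mem_filter]; exact ⟨mem_univ i, by omega⟩⟩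
    have hA : A = ∅ := by
      rw [Finset.eq_empty_iff_forall_notMem]
      intro i hi
      rw [hAdef, mem_filter] at hi
      have hlt : (∑ j, N j) < ∑ j, c j := by
        apply Finset.sum_lt_sum (fun j _ => hNle j)
        exact ⟨i, mem_univ i, hi.2⟩
      omega
    have hBe : B = ∅ := Finset.not_nonempty_iff_eq_empty.mp hB
    rw [hA, hBe]
    simp only [Finset.sum_empty, add_zero]
    exact mul_nonneg hL hK1R
end
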